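/- Let x be a nonzero complex number and (λ_n)_{n≥1} a sequence of nonzero complex numbers. Then the infinite series ∑_{n≥0} ((λ₁−x)⋯(λ_n−x))/(λ₁⋯λ_n·λ_{n+1}) converges to 1/x if and only if the infinite product ∏_{n≥1} (λ_n−x)/λ_n tends to 0 (i.e., the partial products converge to 0). -/

import Mathlib

open Finset Filter Topology

/-- For nonzero `x` and a sequence `(λ_n)` of nonzero complex numbers (here `lam n = λ_{n+1}`),
the series `∑_{n≥0} ((λ₁−x)⋯(λ_n−x))/(λ₁⋯λ_n·λ_{n+1})` converges to `1/x`
iff the partial products `∏_{n=1}^{k} (λ_n−x)/λ_n` tend to `0`. -/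
theorem stmt1 (x : ℂ) (hx : x ≠ 0) (lam : ℕ → ℂ) (hlam : ∀ n, lam n ≠ 0) :
    Tendsto
        (fun k => ∑ n ∈ Finset.range k,
          (∏ i ∈ Finset.range n, (lam i - x)) /
            ((∏ i ∈ Finset.range n, lam i) * lam n))
        atTop (𝓝 (1 / x))
      ↔ Tendsto (fun k => ∏ n ∈ Finset.range k, (lam n - x) / lam n) atTop (𝓝 0) := by
  set P : ℕ → ℂ := fun k => ∏ n ∈ Finset.range k, (lam n - x) / lam n with hP
  have key : ∀ k, (∑ n ∈ Finset.range k,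
      (∏ i ∈ Finset.range n, (lam i - x)) /
        ((∏ i ∈ Finset.range n, lam i) * lam n)) = (1 - P k) / x := by
    intro k
    induction k with
    | zero => simp [hP]
    | succ k ih =>
      rw [Finset.sum_range_succ, ih]
      have hPk : P (k+1) = P k * ((lam k - x) / lam k) := by
        simp only [hP]; rw [Finset.prod_range_succ]
      have hprod : (∏ i ∈ Finset.range k, (lam i - x)) /
          ((∏ i ∈ Finset.range k, lam i) * lam k) = P k / lam k := by
        simp only [hP]
        rw [Finset.prod_div_distrib]
        field_simp
      rw [hprod, hPk]
      have h1 : lam k ≠ 0 := hlam k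
      field_simp
      ring
  simp only [key]
  constructor
  · intro h
    have h2 : Tendsto (fun k => 1 - x * ((1 - P k) / x)) atTop (𝓝 (1 - x * (1/x))) :=
      (tendsto_const_nhds.sub ((tendsto_const_nhds.mul h)))
    have h3 : (1 : ℂ) - x * (1/x) = 0 := by field_simp; ring
    rw [h3] at h2
    convert h2 using 2 with k
    field_simp
    ring
  · intro h
    have h2 : Tendsto (fun k => (1 - P k) / x) atTop (𝓝 ((1 - 0) / x)) :=
      ((tendsto_const_nhds.sub h)).div_const x
    simpa using h2
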